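/- Let M ∈ ℝ^{n×n} and P ∈ 𝕊^n positive definite such that [[−rP, MP],[P Mᵀ, −rP]] ≺ 0 for some r > 0. Then every eigenvalue λ of M satisfies |λ| < r. -/

import Mathlib

open Matrix
open scoped ComplexOrder

lemma posDef_map_ofReal {m : Type*} [Fintype m] {N : Matrix m m ℝ} (h : N.PosDef) :
    (N.map (Complex.ofReal ·)).PosDef := by
  have hsymm : Nᵀ = N := h.isHermitian
  have hsym : ∀ i j, N j i = N i j := fun i j => congrFun (congrFun hsymm i) j
  rw [posDef_iff_dotProduct_mulVec]
  constructor
  · ext i j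
    simp only [conjTranspose_apply, Matrix.map_apply, RCLike.star_def, Complex.conj_ofReal]
    exact_mod_cast hsym i j
  · intro z hz
    set a : m → ℝ := fun i => (z i).re with ha
    set b : m → ℝ := fun i => (z i).im with hb
    have hswap : a ⬝ᵥ N *ᵥ b = b ⬝ᵥ N *ᵥ a := by
      rw [Matrix.dotProduct_mulVec, ← Matrix.mulVec_transpose, hsymm, dotProduct_comm]
    have key : star z ⬝ᵥ (N.map (Complex.ofReal ·) *ᵥ z)
        = ((a ⬝ᵥ N *ᵥ a + b ⬝ᵥ N *ᵥ b : ℝ) : ℂ)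
          + ((a ⬝ᵥ N *ᵥ b - b ⬝ᵥ N *ᵥ a : ℝ) : ℂ) * Complex.I := by
      simp only [dotProduct, mulVec, Pi.star_apply, Matrix.map_apply, Finset.mul_sum,
        Complex.ext_iff, Complex.add_re, Complex.add_im, Complex.re_sum, Complex.im_sum,
        Complex.mul_re, Complex.mul_im, Complex.ofReal_sum, Complex.I_re, Complex.I_im,
        Complex.ofReal_re, Complex.ofReal_im, RCLike.star_def, Complex.conj_re, Complex.conj_im]
      constructor <;> ring_nf
      · rw [← Finset.sum_add_distrib]
        refine Finset.sum_congr rfl fun i _ => ?_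
        rw [← Finset.sum_add_distrib]
        exact Finset.sum_congr rfl fun j _ => by simp only [ha, hb]; ring
      · rw [← Finset.sum_sub_distrib]
        refine Finset.sum_congr rfl fun i _ => ?_
        rw [← Finset.sum_sub_distrib]
        exact Finset.sum_congr rfl fun j _ => by simp only [ha, hb]; ring
    rw [key, hswap, sub_self, Complex.ofReal_zero, zero_mul, add_zero]
    rw [Complex.zero_lt_real]
    have hqa : 0 ≤ a ⬝ᵥ N *ᵥ a := by simpa using h.posSemidef.dotProduct_mulVec_nonneg a
    have hqb : 0 ≤ b ⬝ᵥ N *ᵥ b := by simpa using h.posSemidef.dotProduct_mulVec_nonneg b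
    have hne : a ≠ 0 ∨ b ≠ 0 := by
      by_contra hc
      push_neg at hc
      apply hz
      funext i
      have h1 := congrFun hc.1 i
      have h2 := congrFun hc.2 i
      simp only [ha, hb, Pi.zero_apply] at h1 h2
      exact Complex.ext h1 h2
    rcases hne with hne | hne
    · have := h.dotProduct_mulVec_pos hne
      simp only [star_trivial] at this
      have : 0 < a ⬝ᵥ N *ᵥ a := by simpa using this
      linarith
    · have := h.dotProduct_mulVec_pos hne
      have : 0 < b ⬝ᵥ N *ᵥ b := by simpa using this
      linarith

theorem stmt_14 {n : ℕ} (r : ℝ) (hr : 0 < r)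
    (M : Matrix (Fin n) (Fin n) ℝ) (P : Matrix (Fin n) (Fin n) ℝ)
    (hP : P.PosDef)
    (hLMI : (-(Matrix.fromBlocks (-(r • P)) (M * P) (P * Mᵀ) (-(r • P)))).PosDef) :
    ∀ lam : ℂ, lam ∈ spectrum ℂ (M.map (Complex.ofReal ·)) →
      ‖lam‖ < r := by
  intro lam hlam
  set Mc : Matrix (Fin n) (Fin n) ℂ := M.map (Complex.ofReal ·) with hMc
  set Pc : Matrix (Fin n) (Fin n) ℂ := P.map (Complex.ofReal ·) with hPc
  -- complexified LMI
  have hmap : (-(Matrix.fromBlocks (-(r • P)) (M * P) (P * Mᵀ) (-(r • P)))).map (Complex.ofReal ·)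
      = Matrix.fromBlocks ((r : ℂ) • Pc) (-(Mc * Pc)) (-(Pc * Mcᵀ)) ((r : ℂ) • Pc) := by
    ext (i | i) (j | j) <;>
      simp [Matrix.map_apply, Matrix.mul_apply, hMc, hPc, Matrix.fromBlocks] <;>
      push_cast <;> ring
  have hN : (Matrix.fromBlocks ((r : ℂ) • Pc) (-(Mc * Pc)) (-(Pc * Mcᵀ)) ((r : ℂ) • Pc)).PosDef :=
    hmap ▸ posDef_map_ofReal hLMI
  have hPcpd : Pc.PosDef := posDef_map_ofReal hP
  -- Mc has real entries
  have hMcH : Mcᴴ = Mcᵀ := by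
    ext i j
    simp [conjTranspose_apply, Matrix.map_apply, hMc, Complex.conj_ofReal]
  -- eigenvector of Mcᵀ with eigenvalue conj lam
  have hdet : (lam • (1 : Matrix (Fin n) (Fin n) ℂ) - Mc).det = 0 := by
    have h1 := spectrum.mem_iff.mp hlam
    rw [Matrix.isUnit_iff_isUnit_det, isUnit_iff_ne_zero, not_ne_iff] at h1
    rw [← h1, Algebra.algebraMap_eq_smul_one]
  have hdetT : ((starRingEnd ℂ lam) • (1 : Matrix (Fin n) (Fin n) ℂ) - Mcᵀ).det = 0 := by
    have : (starRingEnd ℂ lam) • (1 : Matrix (Fin n) (Fin n) ℂ) - Mcᵀ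
        = (lam • (1 : Matrix (Fin n) (Fin n) ℂ) - Mc)ᴴ := by
      rw [conjTranspose_sub, conjTranspose_smul, conjTranspose_one, hMcH]
      rfl
    rw [this, Matrix.det_conjTranspose, hdet, star_zero]
  obtain ⟨u, hu0, hu⟩ := Matrix.exists_mulVec_eq_zero_iff.mpr hdetT
  have hMu : Mcᵀ *ᵥ u = (starRingEnd ℂ lam) • u := by
    have := hu
    rw [Matrix.sub_mulVec, Matrix.smul_mulVec, Matrix.one_mulVec, sub_eq_zero] at this
    exact this.symm
  have hvm : star u ᵥ* Mc = lam • star u := by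
    have h1 : Mc = (Mcᵀ)ᴴ := by rw [← hMcH, conjTranspose_conjTranspose]
    rw [h1, ← Matrix.star_mulVec, hMu, star_smul]
    simp
  set c : ℂ := starRingEnd ℂ lam / r with hc
  set z : (Fin n) ⊕ (Fin n) → ℂ := Sum.elim u (c • u) with hzdef
  have hz0 : z ≠ 0 := by
    intro hze
    apply hu0
    funext i
    exact congrFun hze (Sum.inl i)
  set p : ℂ := star u ⬝ᵥ (Pc *ᵥ u) with hp
  have hppos : 0 < p := hPcpd.dotProduct_mulVec_pos hu0
  have hQval : star z ⬝ᵥ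
      ((Matrix.fromBlocks ((r : ℂ) • Pc) (-(Mc * Pc)) (-(Pc * Mcᵀ)) ((r : ℂ) • Pc)) *ᵥ z)
      = ((r - Complex.normSq lam / r : ℝ) : ℂ) * p := by
    rw [hzdef, Function.star_sumElim, Matrix.fromBlocks_mulVec,
      sumElim_dotProduct_sumElim]
    simp only [Sum.elim_comp_inl, Sum.elim_comp_inr]
    rw [Matrix.neg_mulVec, Matrix.neg_mulVec, ← Matrix.mulVec_mulVec, ← Matrix.mulVec_mulVec,
      Matrix.mulVec_smul, hMu]
    simp only [Matrix.smul_mulVec, Matrix.mulVec_smul, star_smul,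
      dotProduct_add, dotProduct_neg, dotProduct_smul,
      smul_dotProduct, Matrix.dotProduct_mulVec, hvm, smul_dotProduct]
    rw [← Matrix.dotProduct_mulVec, ← hp]
    simp only [Matrix.smul_vecMul, smul_dotProduct, ← Matrix.dotProduct_mulVec, ← hp]
    simp only [smul_eq_mul, hc, map_div₀, Complex.conj_conj, Complex.conj_ofReal]
    rw [show ((r - Complex.normSq lam / r : ℝ) : ℂ)
        = ((r : ℂ) - lam * starRingEnd ℂ lam / r) by push_cast [← Complex.mul_conj]; ring]
    have hr0 : (r : ℂ) ≠ 0 := by exact_mod_cast hr.ne'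
    field_simp
    ring
  have hQpos := hN.dotProduct_mulVec_pos hz0
  rw [hQval] at hQpos
  have hpre : 0 < p.re := by
    rw [Complex.lt_def] at hppos
    simpa using hppos.1
  have hpim : p.im = 0 := by
    rw [Complex.lt_def] at hppos
    simpa using hppos.2.symm
  have hQre : 0 < (((r - Complex.normSq lam / r : ℝ) : ℂ) * p).re := by
    rw [Complex.lt_def] at hQpos
    simpa using hQpos.1
  rw [Complex.re_ofReal_mul] at hQre
  have ht : 0 < r - Complex.normSq lam / r := by
    by_contra hcon
    push_neg at hcon
    have h2 : (r - Complex.normSq lam / r) * p.re ≤ 0 :=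
      mul_nonpos_iff.mpr (Or.inr ⟨hcon, hpre.le⟩)
    linarith
  have habs : ‖lam‖ ^ 2 < r ^ 2 := by
    rw [Complex.sq_norm]
    have h3 : Complex.normSq lam / r < r := by linarith
    have h4 : Complex.normSq lam < r * r := (div_lt_iff₀ hr).mp h3
    rw [sq]
    linarith
  exact lt_of_pow_lt_pow_left₀ 2 hr.le habs
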